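/- Let a be a nonzero positive bounded linear operator on a complex Hilbert space H with finite spectrum, and let M be the natural number with f_M(a) ≠ 0 and f_{M+1}(a) = 0. Then the range of a is a closed subspace of H and a·p_M(a) equals the orthogonal projection of H onto the range of a. In particular, if a is invertible then p_M(a) = a⁻¹. -/

import Mathlib

section Sequences

variable {A : Type*} [CStarAlgebra A]

/-- The sequence `f₀(a) = a`, `f_{m+1}(a) = f_m(a)·(‖f_m(a)‖·1 − f_m(a))`. -/
noncomputable def fSeq (a : A) : ℕ → A
  | 0 => a
  | m + 1 => fSeq a m * (‖fSeq a m‖ • (1 : A) - fSeq a m)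

/-- The sequence `g_m(a) = ‖f_m(a)‖·1 − f_m(a)`. -/
noncomputable def gSeq (a : A) (m : ℕ) : A := ‖fSeq a m‖ • (1 : A) - fSeq a m

open Classical in
/-- The sequence `p_m(a)`: as long as `f_m(a) ≠ 0`,
`p_m(a) = (1/‖f₀(a)‖)·1 + Σ_{l=1}^m (∏_{k=0}^{l-1} g_k(a)²)/(∏_{k=0}^{l} ‖f_k(a)‖)`,
and `p_j(a) = p_M(a)` for `j > M`, where `M` is the last index with `f_M(a) ≠ 0`. -/
noncomputable def pSeq (a : A) : ℕ → A
  | 0 => ‖a‖⁻¹ • (1 : A)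
  | m + 1 =>
    if fSeq a (m + 1) = 0 then pSeq a m
    else pSeq a m +
      (((List.range (m + 2)).map fun k => ‖fSeq a k‖).prod)⁻¹ •
        ((List.range (m + 1)).map fun k => gSeq a k ^ 2).prod

end Sequences

section Aux

variable {A : Type*} [CStarAlgebra A]

lemma fSeq_succ (a : A) (m : ℕ) : fSeq a (m + 1) = fSeq a m * gSeq a m := rfl

lemma fSeq_zero (a : A) : fSeq a 0 = a := rfl

/-- `a` commutes with every `fSeq a m`. -/
lemma commute_a_fSeq (a : A) (m : ℕ) : Commute a (fSeq a m) := by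
  induction m with
  | zero => exact Commute.refl a
  | succ m ih =>
    rw [fSeq_succ]
    exact ih.mul_right (((Commute.one_right a).smul_right _).sub_right ih)

lemma commute_a_gSeq (a : A) (m : ℕ) : Commute a (gSeq a m) :=
  ((Commute.one_right a).smul_right _).sub_right (commute_a_fSeq a m)

lemma commute_fSeq (a : A) (m n : ℕ) : Commute (fSeq a m) (fSeq a n) := by
  induction m with
  | zero => exact commute_a_fSeq a n
  | succ m ih =>
    rw [fSeq_succ]
    exact (ih.mul_left (((Commute.one_left _).smul_left _).sub_left ih))

lemma commute_fSeq_gSeq (a : A) (m n : ℕ) : Commute (fSeq a m) (gSeq a n) :=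
  ((Commute.one_right _).smul_right _).sub_right (commute_fSeq a m n)

lemma commute_gSeq (a : A) (m n : ℕ) : Commute (gSeq a m) (gSeq a n) :=
  ((Commute.one_left _).smul_left _).sub_left (commute_fSeq_gSeq a m n)

/-- abbreviation for the product of the `gSeq`s. -/
noncomputable def QProd (a : A) (m : ℕ) : A := ((List.range m).map (gSeq a)).prod

/-- abbreviation for the product of the norms. -/
noncomputable def nProd (a : A) (m : ℕ) : ℝ := ((List.range m).map fun k => ‖fSeq a k‖).prod

lemma QProd_succ (a : A) (m : ℕ) : QProd a (m + 1) = QProd a m * gSeq a m := by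
  simp [QProd, List.range_succ]

lemma nProd_succ (a : A) (m : ℕ) : nProd a (m + 1) = nProd a m * ‖fSeq a m‖ := by
  simp [nProd, List.range_succ]

lemma commute_a_QProd (a : A) (m : ℕ) : Commute a (QProd a m) := by
  refine Commute.list_prod_right _ _ fun x hx => ?_
  obtain ⟨k, -, rfl⟩ := List.mem_map.mp hx
  exact commute_a_gSeq a k

lemma commute_gSeq_QProd (a : A) (j m : ℕ) : Commute (gSeq a j) (QProd a m) := by
  refine Commute.list_prod_right _ _ fun x hx => ?_
  obtain ⟨k, -, rfl⟩ := List.mem_map.mp hx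
  exact commute_gSeq a j k

lemma fSeq_eq_mul_QProd (a : A) (m : ℕ) : fSeq a m = a * QProd a m := by
  induction m with
  | zero => simp [QProd, fSeq_zero]
  | succ m ih => rw [fSeq_succ, QProd_succ, ih, mul_assoc]

lemma QProd_sq (a : A) (m : ℕ) :
    ((List.range m).map fun k => gSeq a k ^ 2).prod = QProd a m ^ 2 := by
  induction m with
  | zero => simp [QProd]
  | succ m ih =>
    rw [List.range_succ, List.map_append, List.prod_append, ih, QProd_succ]
    simp [((commute_gSeq_QProd a m m).symm).mul_pow]

lemma fSeq_eq_zero_of_le (a : A) {k m : ℕ} (h : k ≤ m) (hk : fSeq a k = 0) :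
    fSeq a m = 0 := by
  induction m, h using Nat.le_induction with
  | base => exact hk
  | succ m _ ih => rw [fSeq_succ, ih, zero_mul]

lemma fSeq_ne_zero_of_le (a : A) {k m : ℕ} (h : k ≤ m) (hm : fSeq a m ≠ 0) :
    fSeq a k ≠ 0 := fun hk => hm (fSeq_eq_zero_of_le a h hk)

lemma nProd_pos (a : A) {m : ℕ} (hm : fSeq a m ≠ 0) : 0 < nProd a (m + 1) := by
  refine List.prod_pos fun x hx => ?_
  obtain ⟨k, hk, rfl⟩ := List.mem_map.mp hx
  rw [List.mem_range, Nat.lt_succ_iff] at hk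
  exact norm_pos_iff.mpr (fSeq_ne_zero_of_le a hk hm)

lemma real_smul_isSelfAdjoint {x : A} (hx : IsSelfAdjoint x) (r : ℝ) :
    IsSelfAdjoint (r • x) := by
  rw [IsSelfAdjoint, star_smul, star_trivial, hx.star_eq]

section SelfAdjoint

variable {a : A} (hsa : IsSelfAdjoint a)
include hsa

lemma isSelfAdjoint_fSeq (m : ℕ) : IsSelfAdjoint (fSeq a m) := by
  induction m with
  | zero => exact hsa
  | succ m ih =>
    have hg : IsSelfAdjoint (gSeq a m) := (real_smul_isSelfAdjoint (IsSelfAdjoint.one A) _).sub ih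
    rw [fSeq_succ, IsSelfAdjoint, star_mul, hg, ih,
      (commute_fSeq_gSeq a m m).eq]

lemma isSelfAdjoint_gSeq (m : ℕ) : IsSelfAdjoint (gSeq a m) :=
  (real_smul_isSelfAdjoint (IsSelfAdjoint.one A) _).sub (isSelfAdjoint_fSeq hsa m)

lemma isSelfAdjoint_QProd (m : ℕ) : IsSelfAdjoint (QProd a m) := by
  induction m with
  | zero => simp [QProd, IsSelfAdjoint]
  | succ m ih =>
    rw [QProd_succ, IsSelfAdjoint, star_mul, isSelfAdjoint_gSeq hsa m, ih,
      (commute_gSeq_QProd a m m).symm.eq]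

lemma isSelfAdjoint_pSeq (m : ℕ) : IsSelfAdjoint (pSeq a m) := by
  induction m with
  | zero => exact real_smul_isSelfAdjoint (IsSelfAdjoint.one A) _
  | succ m ih =>
    rw [pSeq]
    split
    · exact ih
    · exact ih.add (real_smul_isSelfAdjoint ((QProd_sq a (m + 1)) ▸
        ((isSelfAdjoint_QProd hsa (m + 1)).pow 2)) _)

end SelfAdjoint

lemma commute_a_pSeq (a : A) (m : ℕ) : Commute a (pSeq a m) := by
  induction m with
  | zero => exact (Commute.one_right a).smul_right _
  | succ m ih =>
    rw [pSeq]
    split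
    · exact ih
    · refine ih.add_right ?_
      refine Commute.smul_right ?_ _
      rw [QProd_sq]
      exact (commute_a_QProd a (m + 1)).pow_right 2

/-- The key identity: `1 - a·p_m = (∏_{k≤m} ‖f_k‖)⁻¹ • ∏_{k≤m} g_k`. -/
lemma key_identity (a : A) : ∀ m : ℕ, fSeq a m ≠ 0 →
    1 - a * pSeq a m = (nProd a (m + 1))⁻¹ • QProd a (m + 1) := by
  intro m
  induction m with
  | zero =>
    intro h
    have hn : ‖a‖ ≠ 0 := norm_ne_zero_iff.mpr h
    rw [pSeq, mul_smul_comm, mul_one]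
    have h1 : nProd a 1 = ‖a‖ := by simp [nProd, List.range_succ, fSeq_zero]
    have h2 : QProd a 1 = gSeq a 0 := by simp [QProd, List.range_succ]
    rw [h1, h2, gSeq, fSeq_zero, smul_sub, inv_smul_smul₀ hn]
  | succ m ih =>
    intro h
    have hm : fSeq a m ≠ 0 := fSeq_ne_zero_of_le a (Nat.le_succ m) h
    have hP : nProd a (m + 1) ≠ 0 := (nProd_pos a hm).ne'
    have hf : ‖fSeq a (m + 1)‖ ≠ 0 := norm_ne_zero_iff.mpr h
    have hPdef : ((List.range (m + 2)).map fun k => ‖fSeq a k‖).prod = nProd a (m + 2) := rfl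
    have haQ : a * QProd a (m + 1) ^ 2 = fSeq a (m + 1) * QProd a (m + 1) := by
      rw [sq, ← mul_assoc, ← fSeq_eq_mul_QProd]
    have hP2 : nProd a (m + 2) = nProd a (m + 1) * ‖fSeq a (m + 1)‖ := nProd_succ a (m + 1)
    have hinv : (nProd a (m + 1))⁻¹ = (nProd a (m + 2))⁻¹ * ‖fSeq a (m + 1)‖ := by
      field_simp [hP2]
      exact hP2
    show 1 - a * pSeq a (m + 1) = (nProd a (m + 2))⁻¹ • QProd a (m + 2)
    rw [pSeq, if_neg h, QProd_sq, hPdef, mul_add, sub_add_eq_sub_sub, ih hm,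
      mul_smul_comm, haQ, hinv]
    have hQ2 : QProd a (m + 2) = gSeq a (m + 1) * QProd a (m + 1) :=
      (QProd_succ a (m + 1)).trans (commute_gSeq_QProd a (m + 1) (m + 1)).eq.symm
    rw [hQ2, gSeq, sub_mul, smul_mul_assoc, one_mul, smul_sub, smul_smul]

end Aux

/-- For a nonzero positive operator `a` with finite spectrum and `M` the last index
with `f_M(a) ≠ 0`, the range of `a` is closed and `a·p_M(a)` is the orthogonal
projection onto the range of `a` (i.e. the self-adjoint idempotent with range equal
to the range of `a`). In particular, if `a` is invertible then `p_M(a) = a⁻¹`. -/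
theorem mul_pSeq_eq_proj_of_finite_spectrum {H : Type*}
    [NormedAddCommGroup H] [InnerProductSpace ℂ H] [CompleteSpace H]
    (a : H →L[ℂ] H) (ha : 0 ≤ a) (ha' : a ≠ 0)
    (hfin : (spectrum ℂ a).Finite)
    (M : ℕ) (hM : fSeq a M ≠ 0) (hM' : fSeq a (M + 1) = 0) :
    IsClosed (LinearMap.range (a : H →ₗ[ℂ] H) : Set H)
      ∧ IsSelfAdjoint (a * pSeq a M)
      ∧ IsIdempotentElem (a * pSeq a M)
      ∧ LinearMap.range ((a * pSeq a M : H →L[ℂ] H) : H →ₗ[ℂ] H) = LinearMap.range (a : H →ₗ[ℂ] H)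
      ∧ (IsUnit a → pSeq a M = Ring.inverse a) := by
  have hsa : IsSelfAdjoint a := .of_nonneg ha
  set e := a * pSeq a M with he
  have hkey : 1 - e = (nProd a (M + 1))⁻¹ • QProd a (M + 1) := key_identity a M hM
  have haQ : a * QProd a (M + 1) = 0 := by rw [← fSeq_eq_mul_QProd]; exact hM'
  have hcomm : Commute a e := (Commute.refl a).mul_right (commute_a_pSeq a M)
  have hae : a * (1 - e) = 0 := by
    rw [hkey, mul_smul_comm, haQ, smul_zero]
  have hEA : a * e = a := by
    rw [mul_sub, mul_one, sub_eq_zero] at hae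
    exact hae.symm
  have haea : e * a = a := by rw [← hcomm.eq, hEA]
  have h0 : (1 - e) * e = 0 := by
    rw [hkey, smul_mul_assoc, he, ← mul_assoc, ← (commute_a_QProd a (M + 1)).eq,
      haQ, zero_mul, smul_zero]
  have hidem : IsIdempotentElem e := by
    have h0' := h0
    rw [sub_mul, one_mul, sub_eq_zero] at h0'
    exact h0'.symm
  have hesa : IsSelfAdjoint e := by
    rw [he, IsSelfAdjoint, star_mul, (isSelfAdjoint_pSeq hsa M).star_eq, hsa.star_eq,
      (commute_a_pSeq a M).eq]
  have hrange : LinearMap.range (e : H →ₗ[ℂ] H) = LinearMap.range (a : H →ₗ[ℂ] H) := by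
    apply le_antisymm
    · rintro x ⟨y, rfl⟩
      exact ⟨pSeq a M y, rfl⟩
    · rintro x ⟨y, rfl⟩
      refine ⟨a y, ?_⟩
      have : (e * a) y = a y := by rw [haea]
      exact this
  have hker : (LinearMap.range (e : H →ₗ[ℂ] H) : Set H) = (LinearMap.ker ((1 - e : H →L[ℂ] H) : H →ₗ[ℂ] H) : Set H) := by
    ext x
    simp only [SetLike.mem_coe, LinearMap.mem_range, LinearMap.mem_ker]
    constructor
    · rintro ⟨y, rfl⟩
      calc (1 - e) (e y) = ((1 - e) * e) y := rfl
      _ = 0 := by rw [h0]; rfl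
    · intro hx
      refine ⟨x, ?_⟩
      have hx' : x - e x = 0 := by
        have h1 : (1 - e) x = x - e x := by simp [ContinuousLinearMap.sub_apply]
        rw [← h1]
        exact hx
      rw [sub_eq_zero] at hx'
      exact hx'.symm
  have hclosed : IsClosed (LinearMap.range (a : H →ₗ[ℂ] H) : Set H) := by
    rw [← hrange, hker]
    exact (ContinuousLinearMap.isClosed_ker (1 - e : H →L[ℂ] H))
  refine ⟨hclosed, hesa, hidem, hrange, fun hu => ?_⟩
  have he1 : e = 1 := hu.mul_left_cancel (by rw [hEA, mul_one])
  have h1 : a * pSeq a M = 1 := by rw [← he, he1]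
  calc pSeq a M = Ring.inverse a * (a * pSeq a M) := by
        rw [← mul_assoc, Ring.inverse_mul_cancel a hu, one_mul]
  _ = Ring.inverse a := by rw [h1, mul_one]
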